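/- Let ∈ DQ^{n×n} be Hermitian with eigenvalues λ₁ ≤ λ₂ ≤ … ≤ λₙ (dual numbers, ordered by the total order on dual numbers) and orthonormal eigenbasis. Then for any appreciable dual quaternion vector v̂, λ₁ ≤ θ(Â, v̂) ≤ λₙ. -/

import Mathlib

open Quaternion Matrix TrivSqZeroExt

/-- The dual quaternions: dual numbers over the real quaternions. -/
abbrev DQ : Type := DualNumber (Quaternion ℝ)

/-- Conjugate of a dual quaternion: quaternion conjugation on both parts. -/
noncomputable def dqConj (q : DQ) : DQ := ⟨star q.fst, star q.snd⟩

/-- The inverse of an appreciable dual quaternion `q = q_st + q_I ε`, namely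
`q_st⁻¹ − q_st⁻¹ q_I q_st⁻¹ ε`. -/
noncomputable def dqInv (q : DQ) : DQ := ⟨q.fst⁻¹, -(q.fst⁻¹ * q.snd * q.fst⁻¹)⟩

/-- Embedding of dual numbers into dual quaternions. -/
noncomputable def d2dq (d : DualNumber ℝ) : DQ := ⟨(d.fst : Quaternion ℝ), (d.snd : Quaternion ℝ)⟩

/-- The dual number obtained from a dual quaternion by taking real parts componentwise
(used to read off a dual quaternion that is in fact a dual number). -/
noncomputable def toD (q : DQ) : DualNumber ℝ := ⟨q.fst.re, q.snd.re⟩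

/-- `x̂* ŷ = Σᵢ x̂ᵢ* ŷᵢ` for dual quaternion vectors. -/
noncomputable def dotC {n : ℕ} (x y : Fin n → DQ) : DQ := ∑ i, dqConj (x i) * y i

/-- Conjugate transpose of a dual quaternion matrix. -/
noncomputable def ctrans {n : ℕ} (M : Matrix (Fin n) (Fin n) DQ) : Matrix (Fin n) (Fin n) DQ :=
  Matrix.of fun i j => dqConj (M j i)

/-- The total order on dual numbers: `p ≤ q` iff `p_st < q_st`, or
`p_st = q_st` and `p_I ≤ q_I`. -/
def dle (p q : DualNumber ℝ) : Prop := p.fst < q.fst ∨ (p.fst = q.fst ∧ p.snd ≤ q.snd)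

/-- Square root of a positive appreciable dual number. -/
noncomputable def dsqrt (q : DualNumber ℝ) : DualNumber ℝ :=
  ⟨Real.sqrt q.fst, q.snd / (2 * Real.sqrt q.fst)⟩

/-- Absolute value of a dual number. -/
noncomputable def dabs (q : DualNumber ℝ) : DualNumber ℝ :=
  if q.fst = 0 then ⟨0, |q.snd|⟩ else ⟨|q.fst|, Real.sign q.fst * q.snd⟩

/-- Inverse of an appreciable dual number. -/
noncomputable def dInv (q : DualNumber ℝ) : DualNumber ℝ := ⟨q.fst⁻¹, -(q.snd / q.fst ^ 2)⟩

/-- The 2-norm of an appreciable dual quaternion vector: `‖ŷ‖₂ = √(ŷ* ŷ)`,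
a nonnegative dual number. -/
noncomputable def dnorm {n : ℕ} (y : Fin n → DQ) : DualNumber ℝ := dsqrt (toD (dotC y y))

namespace RB

lemma dq_snd_mul (x y : DQ) : (x*y).snd = x.fst * y.snd + x.snd * y.fst := by
  rw [TrivSqZeroExt.snd_mul]; rfl

lemma d_snd_mul (p q : DualNumber ℝ) : (p*q).snd = p.fst * q.snd + p.snd * q.fst := by
  rw [TrivSqZeroExt.snd_mul]; simp [smul_eq_mul]

lemma dqConj_mul (x y : DQ) : dqConj (x*y) = dqConj y * dqConj x := by
  refine TrivSqZeroExt.ext ?_ ?_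
  · rw [fst_mul]; simp [dqConj, fst_mul]
  · simp only [dqConj, snd_mk, fst_mk, dq_snd_mul, star_add, StarMul.star_mul]
    exact add_comm _ _

lemma dqConj_dqConj (x : DQ) : dqConj (dqConj x) = x := by
  refine TrivSqZeroExt.ext ?_ ?_ <;> simp [dqConj]

lemma dqConj_sum {ι : Type*} (s : Finset ι) (f : ι → DQ) :
    dqConj (∑ i ∈ s, f i) = ∑ i ∈ s, dqConj (f i) := by
  refine TrivSqZeroExt.ext ?_ ?_
  · rw [fst_sum]; simp [dqConj, fst_sum]
  · rw [snd_sum]; simp [dqConj, snd_sum]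

lemma ctrans_ctrans {n : ℕ} (M : Matrix (Fin n) (Fin n) DQ) : ctrans (ctrans M) = M := by
  refine Matrix.ext fun i j => ?_; show dqConj (dqConj (M i j)) = M i j; exact dqConj_dqConj _

lemma dot_shift {n : ℕ} (M : Matrix (Fin n) (Fin n) DQ) (x y : Fin n → DQ) :
    dotC x (M *ᵥ y) = dotC (ctrans M *ᵥ x) y := by
  unfold dotC mulVec dotProduct ctrans
  simp only [Matrix.of_apply, dqConj_sum, dqConj_mul, dqConj_dqConj, Finset.mul_sum,
    Finset.sum_mul, mul_assoc]
  rw [Finset.sum_comm]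

lemma dot_shift' {n : ℕ} (M : Matrix (Fin n) (Fin n) DQ) (x y : Fin n → DQ) :
    dotC (M *ᵥ x) y = dotC x (ctrans M *ᵥ y) := by
  conv_lhs => rw [← ctrans_ctrans M]
  rw [← dot_shift]

end RB

namespace RB2
open RB

lemma d2dq_mul (p q : DualNumber ℝ) : d2dq (p*q) = d2dq p * d2dq q := by
  refine TrivSqZeroExt.ext ?_ ?_
  · rw [fst_mul]; simp [d2dq, fst_mul, coe_mul]
  · rw [dq_snd_mul]; simp only [d2dq, snd_mk, fst_mk, d_snd_mul, dq_snd_mul, coe_add, coe_mul]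

lemma coe_sum' {ι : Type*} (s : Finset ι) (g : ι → ℝ) :
    ((∑ i ∈ s, g i : ℝ) : ℍ[ℝ]) = ∑ i ∈ s, ((g i : ℝ) : ℍ[ℝ]) := by
  induction s using Finset.cons_induction with
  | empty => simp
  | cons a s ha ih => rw [Finset.sum_cons, Finset.sum_cons, coe_add, ih]

lemma d2dq_sum {ι : Type*} (s : Finset ι) (f : ι → DualNumber ℝ) :
    d2dq (∑ i ∈ s, f i) = ∑ i ∈ s, d2dq (f i) := by
  refine TrivSqZeroExt.ext ?_ ?_
  · rw [fst_sum]; simp [d2dq, fst_sum, coe_sum']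
  · rw [snd_sum]; simp [d2dq, snd_sum, coe_sum']

lemma d2dq_comm (c : DualNumber ℝ) (x : DQ) : d2dq c * x = x * d2dq c := by
  refine TrivSqZeroExt.ext ?_ ?_
  · rw [fst_mul, fst_mul]; simp [d2dq, fst_mul, coe_commutes]
  · rw [dq_snd_mul, dq_snd_mul]; simp only [d2dq, fst_mk, snd_mk, dq_snd_mul, coe_commutes]; exact add_comm _ _

lemma conj_self_fst (x : DQ) : (dqConj x * x).fst = ((normSq x.fst : ℝ) : ℍ[ℝ]) := by
  rw [fst_mul]; simp [dqConj, fst_mul, star_mul_self]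

lemma conj_self_snd (x : DQ) :
    (dqConj x * x).snd = ((2 * (star x.fst * x.snd).re : ℝ) : ℍ[ℝ]) := by
  have h : (dqConj x * x).snd = (star x.fst * x.snd) + star (star x.fst * x.snd) := by
    rw [dq_snd_mul]; simp only [dqConj, dq_snd_mul, snd_mk, fst_mk, StarMul.star_mul, star_star]
  rw [h, Quaternion.self_add_star']

lemma conj_self (x : DQ) : dqConj x * x = d2dq (toD (dqConj x * x)) := by
  refine TrivSqZeroExt.ext ?_ ?_
  · rw [show (d2dq (toD (dqConj x * x))).fst = (((dqConj x * x).fst.re : ℝ) : ℍ[ℝ]) from rfl,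
      conj_self_fst, re_coe]
  · rw [show (d2dq (toD (dqConj x * x))).snd = (((dqConj x * x).snd.re : ℝ) : ℍ[ℝ]) from rfl,
      conj_self_snd, re_coe]

lemma t_fst (x : DQ) : (toD (dqConj x * x)).fst = normSq x.fst := by
  rw [show (toD (dqConj x * x)).fst = (dqConj x * x).fst.re from rfl, conj_self_fst, re_coe]

lemma t_snd_zero (x : DQ) (h : x.fst = 0) : (toD (dqConj x * x)).snd = 0 := by
  rw [show (toD (dqConj x * x)).snd = (dqConj x * x).snd.re from rfl, conj_self_snd, re_coe, h]
  simp

lemma coe_inv' (r : ℝ) : ((r : ℝ) : ℍ[ℝ])⁻¹ = ((r⁻¹ : ℝ) : ℍ[ℝ]) := by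
  rcases eq_or_ne r 0 with h | h
  · simp [h]
  · refine inv_eq_of_mul_eq_one_right ?_
    rw [← coe_mul, mul_inv_cancel₀ h]; simp

lemma toD_form (N S : DualNumber ℝ) :
    toD (d2dq N * dqInv (d2dq S)) =
      ⟨N.fst * S.fst⁻¹, N.snd * S.fst⁻¹ - N.fst * S.snd * (S.fst⁻¹ * S.fst⁻¹)⟩ := by
  refine TrivSqZeroExt.ext ?_ ?_
  · show ((d2dq N * dqInv (d2dq S)).fst).re = _
    rw [fst_mul]
    simp only [d2dq, dqInv, fst_mk, snd_mk, coe_inv', ← coe_mul, re_coe]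
  · show ((d2dq N * dqInv (d2dq S)).snd).re = _
    rw [dq_snd_mul]
    simp only [d2dq, dqInv, fst_mk, snd_mk, coe_inv', mul_neg, ← coe_mul, ← coe_neg, ← coe_add,
      re_coe]
    ring

def dnn (d : DualNumber ℝ) : Prop := 0 < d.fst ∨ (d.fst = 0 ∧ 0 ≤ d.snd)

lemma dle_iff (p q : DualNumber ℝ) : dle p q ↔ dnn (q - p) := by
  unfold dle dnn
  rw [fst_sub, snd_sub]
  constructor
  · rintro (h | ⟨h1, h2⟩)
    · left; linarith
    · right; exact ⟨by linarith, by linarith⟩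
  · rintro (h | ⟨h1, h2⟩)
    · left; linarith
    · right; exact ⟨by linarith, by linarith⟩

lemma dnn_add (p q : DualNumber ℝ) (hp : dnn p) (hq : dnn q) : dnn (p + q) := by
  unfold dnn at *
  rw [fst_add, snd_add]
  rcases hp with h | ⟨h1, h2⟩ <;> rcases hq with g | ⟨g1, g2⟩
  · left; linarith
  · left; linarith
  · left; linarith
  · right; exact ⟨by rw [h1, g1]; ring, by linarith⟩

lemma dnn_zero : dnn 0 := by
  right; constructor <;> simp

lemma dnn_sum {ι : Type*} (s : Finset ι) (f : ι → DualNumber ℝ)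
    (h : ∀ i ∈ s, dnn (f i)) : dnn (∑ i ∈ s, f i) := by
  classical
  induction s using Finset.induction_on with
  | empty => simpa using dnn_zero
  | insert _ _ hx ih =>
    rw [Finset.sum_insert hx]
    exact dnn_add _ _ (h _ (Finset.mem_insert_self _ _))
      (ih fun i hi => h i (Finset.mem_insert_of_mem hi))

lemma dnn_term (μ t : DualNumber ℝ) (hμ : dnn μ) (ht1 : 0 ≤ t.fst)
    (ht2 : t.fst = 0 → t.snd = 0) : dnn (μ * t) := by
  unfold dnn at *
  rw [fst_mul, d_snd_mul]
  rcases hμ with h | ⟨h1, h2⟩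
  · rcases lt_or_eq_of_le ht1 with h' | h'
    · left; exact mul_pos h h'
    · right
      rw [← h', ht2 h'.symm]
      constructor <;> simp
  · right
    rw [h1]
    refine ⟨by ring, ?_⟩
    simp only [zero_mul, zero_add]
    exact mul_nonneg h2 ht1

lemma final_lower (a N S : DualNumber ℝ) (hS : 0 < S.fst) (h : dle (a * S) N) :
    dle a ⟨N.fst * S.fst⁻¹, N.snd * S.fst⁻¹ - N.fst * S.snd * (S.fst⁻¹ * S.fst⁻¹)⟩ := by
  have hS' : S.fst ≠ 0 := ne_of_gt hS
  unfold dle at *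
  rw [fst_mul, d_snd_mul] at h
  rcases h with h | ⟨h1, h2⟩
  · left
    show a.fst < N.fst * S.fst⁻¹
    rw [← div_eq_mul_inv, lt_div_iff₀ hS]; exact h
  · right
    constructor
    · show a.fst = N.fst * S.fst⁻¹
      rw [← div_eq_mul_inv, eq_div_iff hS']; exact h1
    · show a.snd ≤ N.snd * S.fst⁻¹ - N.fst * S.snd * (S.fst⁻¹ * S.fst⁻¹)
      rw [← h1]
      rw [show N.snd * S.fst⁻¹ - a.fst * S.fst * S.snd * (S.fst⁻¹ * S.fst⁻¹)
          = (N.snd - a.fst * S.snd) / S.fst from by field_simp]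
      rw [le_div_iff₀ hS]; linarith

lemma final_upper (b N S : DualNumber ℝ) (hS : 0 < S.fst) (h : dle N (b * S)) :
    dle ⟨N.fst * S.fst⁻¹, N.snd * S.fst⁻¹ - N.fst * S.snd * (S.fst⁻¹ * S.fst⁻¹)⟩ b := by
  have hS' : S.fst ≠ 0 := ne_of_gt hS
  unfold dle at *
  rw [fst_mul, d_snd_mul] at h
  rcases h with h | ⟨h1, h2⟩
  · left
    show N.fst * S.fst⁻¹ < b.fst
    rw [← div_eq_mul_inv, div_lt_iff₀ hS]; exact h
  · right
    constructor
    · show N.fst * S.fst⁻¹ = b.fst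
      rw [← div_eq_mul_inv, div_eq_iff hS']; exact h1
    · show N.snd * S.fst⁻¹ - N.fst * S.snd * (S.fst⁻¹ * S.fst⁻¹) ≤ b.snd
      rw [h1]
      rw [show N.snd * S.fst⁻¹ - b.fst * S.fst * S.snd * (S.fst⁻¹ * S.fst⁻¹)
          = (N.snd - b.fst * S.snd) / S.fst from by field_simp]
      rw [div_le_iff₀ hS]; linarith

end RB2


open RB RB2 in
/-- for Hermitian `Â` with unitary diagonalization `Â Û = Û diag(λ₁,…,λₙ)`,
the eigenvalues `λᵢ` being dual numbers ordered increasingly in the total order on dual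
numbers, any appreciable `v̂` satisfies `λ₁ ≤ θ(Â, v̂) ≤ λₙ`. -/
theorem rayleigh_bounds {n : ℕ} (hn : 0 < n) (A U : Matrix (Fin n) (Fin n) DQ)
    (lam : Fin n → DualNumber ℝ) (v : Fin n → DQ)
    (hA : ctrans A = A)
    (hU1 : ctrans U * U = 1) (hU2 : U * ctrans U = 1)
    (hAU : A * U = U * Matrix.diagonal (fun i => d2dq (lam i)))
    (hsort : ∀ i j : Fin n, i ≤ j → dle (lam i) (lam j))
    (hv : (fun i => (v i).fst) ≠ 0) :
    dle (lam ⟨0, hn⟩) (toD (dotC v (A *ᵥ v) * dqInv (dotC v v))) ∧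
    dle (toD (dotC v (A *ᵥ v) * dqInv (dotC v v))) (lam ⟨n - 1, Nat.sub_lt hn one_pos⟩) := by
  classical
  set w : Fin n → DQ := ctrans U *ᵥ v with hw
  have hvw : U *ᵥ w = v := by rw [hw, mulVec_mulVec, hU2, one_mulVec]
  set t : Fin n → DualNumber ℝ := fun i => toD (dqConj (w i) * w i) with htdef
  set S : DualNumber ℝ := ∑ i, t i with hSdef
  set N : DualNumber ℝ := ∑ i, lam i * t i with hNdef
  have e1 : dotC v v = d2dq S := by
    have h1 : dotC v v = dotC w w := by
      conv_lhs => rw [← hvw]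
      rw [dot_shift', mulVec_mulVec, hU1, one_mulVec]
    rw [h1, hSdef, d2dq_sum]
    exact Finset.sum_congr rfl fun i _ => conj_self _
  have e2 : dotC v (A *ᵥ v) = d2dq N := by
    have h1 : dotC v (A *ᵥ v) = dotC w ((Matrix.diagonal fun i => d2dq (lam i)) *ᵥ w) := by
      conv_lhs => rw [← hvw]
      rw [dot_shift', mulVec_mulVec, mulVec_mulVec, Matrix.mul_assoc, hAU,
        ← Matrix.mul_assoc, hU1, Matrix.one_mul]
    rw [h1, hNdef, d2dq_sum]
    unfold dotC
    refine Finset.sum_congr rfl fun i _ => ?_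
    rw [mulVec_diagonal, ← mul_assoc, ← d2dq_comm, mul_assoc, conj_self, ← d2dq_mul]
  have hwnz : ∃ i, (w i).fst ≠ 0 := by
    by_contra h
    push_neg at h
    apply hv
    funext j
    show (v j).fst = 0
    rw [← hvw]
    show ((U *ᵥ w) j).fst = 0
    simp [mulVec, dotProduct, fst_sum, fst_mul, h]
  have ht1 : ∀ i, 0 ≤ (t i).fst := fun i => by
    simp only [htdef]; rw [t_fst]; exact normSq_nonneg
  have ht2 : ∀ i, (t i).fst = 0 → (t i).snd = 0 := fun i h => by
    simp only [htdef] at h ⊢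
    rw [t_fst] at h
    exact t_snd_zero _ (normSq_eq_zero.mp h)
  have hSpos : 0 < S.fst := by
    obtain ⟨i0, hi0⟩ := hwnz
    rw [hSdef, fst_sum]
    refine Finset.sum_pos' (fun i _ => ht1 i) ⟨i0, Finset.mem_univ _, ?_⟩
    simp only [htdef]
    rw [t_fst]
    exact lt_of_le_of_ne normSq_nonneg (Ne.symm (normSq_ne_zero.mpr hi0))
  have hdiffL : N - lam ⟨0, hn⟩ * S = ∑ i, (lam i - lam ⟨0, hn⟩) * t i := by
    rw [hNdef, hSdef, Finset.mul_sum, ← Finset.sum_sub_distrib]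
    exact Finset.sum_congr rfl fun i _ => (sub_mul _ _ _).symm
  have hL : dle (lam ⟨0, hn⟩ * S) N := by
    rw [dle_iff, hdiffL]
    refine dnn_sum _ _ fun i _ => dnn_term _ _ ?_ (ht1 i) (ht2 i)
    exact (dle_iff _ _).mp (hsort _ _ (by simp [Fin.le_def]))
  have hdiffU : lam ⟨n - 1, Nat.sub_lt hn one_pos⟩ * S - N
      = ∑ i, (lam ⟨n - 1, Nat.sub_lt hn one_pos⟩ - lam i) * t i := by
    rw [hNdef, hSdef, Finset.mul_sum, ← Finset.sum_sub_distrib]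
    exact Finset.sum_congr rfl fun i _ => (sub_mul _ _ _).symm
  have hUp : dle N (lam ⟨n - 1, Nat.sub_lt hn one_pos⟩ * S) := by
    rw [dle_iff, hdiffU]
    refine dnn_sum _ _ fun i _ => dnn_term _ _ ?_ (ht1 i) (ht2 i)
    refine (dle_iff _ _).mp (hsort _ _ ?_)
    simp only [Fin.le_def]
    exact Nat.le_pred_of_lt i.isLt
  constructor
  · rw [e1, e2, toD_form]
    exact final_lower _ _ _ hSpos hL
  · rw [e1, e2, toD_form]
    exact final_upper _ _ _ hSpos hUp
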